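/- G(V) has a cut edge if and only if V has a composition series of length 3 and V has a simple R-submodule contained in a unique maximal R-submodule of V. -/

import Mathlib

/-- The vertices of the intersection graph: proper submodules of `V`. -/
def ProperSubmodule (R V : Type*) [Ring R] [AddCommGroup V] [Module R V] :=
  {W : Submodule R V // W ≠ ⊥ ∧ W ≠ ⊤}

/-- The intersection graph of proper submodules of `V`: two distinct proper
submodules are adjacent iff their intersection is nonzero. -/
def intersectionGraph (R V : Type*) [Ring R] [AddCommGroup V] [Module R V] :
    SimpleGraph (ProperSubmodule R V) where
  Adj U W := U ≠ W ∧ U.1 ⊓ W.1 ≠ ⊥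
  symm := by
    constructor
    intro U W h
    exact ⟨h.1.symm, by rw [inf_comm]; exact h.2⟩
  loopless := ⟨fun U h => h.1 rfl⟩

/-- `V` has a composition series (from `⊥` to `⊤`) of length `n`. -/
def HasCompositionSeriesOfLength (R V : Type*) [Ring R] [AddCommGroup V] [Module R V]
    (n : ℕ) : Prop :=
  ∃ s : RelSeries {(x, y) : Submodule R V × Submodule R V | x ⋖ y},
    s.head = ⊥ ∧ s.last = ⊤ ∧ s.length = n

/-- A cut edge: an edge of `G` whose removal (keeping its endpoints) disconnects
two vertices that were connected, i.e. increases the number of components. -/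
def SimpleGraph.IsCutEdge {α : Type*} (G : SimpleGraph α) (x y : α) : Prop :=
  G.Adj x y ∧ ∃ a b : α, G.Reachable a b ∧ ¬ (G.deleteEdges {s(x, y)}).Reachable a b

namespace CutEdgeAux

/-! ### Graph lemmas -/

lemma reachable_delete {α : Type*} {G : SimpleGraph α} {x y : α}
    (h : (G.deleteEdges {s(x,y)}).Reachable x y) {a b : α} (w : G.Walk a b) :
    (G.deleteEdges {s(x,y)}).Reachable a b := by
  induction w with
  | nil => exact SimpleGraph.Reachable.refl _
  | @cons u v b h' p ih =>
    refine SimpleGraph.Reachable.trans ?_ ih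
    by_cases he : s(u, v) = s(x, y)
    · rcases Sym2.eq_iff.mp he with ⟨rfl, rfl⟩ | ⟨rfl, rfl⟩
      · exact h
      · exact h.symm
    · exact SimpleGraph.Adj.reachable
        (by rw [SimpleGraph.deleteEdges_adj]; exact ⟨h', by simpa using he⟩)

lemma not_reachable_of_isCutEdge {α : Type*} {G : SimpleGraph α} {x y : α}
    (h : G.IsCutEdge x y) : ¬ (G.deleteEdges {s(x,y)}).Reachable x y := by
  rintro hr
  obtain ⟨hadj, a, b, hab, hnab⟩ := h
  obtain ⟨w⟩ := hab
  exact hnab (reachable_delete hr w)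

lemma isCutEdge_of_unique_neighbor {α : Type*} {G : SimpleGraph α} {x y : α}
    (hadj : G.Adj x y) (hu : ∀ z, G.Adj x z → z = y) : G.IsCutEdge x y := by
  refine ⟨hadj, x, y, hadj.reachable, fun hr => ?_⟩
  obtain ⟨w⟩ := hr
  cases w with
  | nil => exact hadj.ne rfl
  | cons h' p =>
    rw [SimpleGraph.deleteEdges_adj] at h'
    exact h'.2 (by rw [hu _ h'.1]; exact Set.mem_singleton _)

lemma isCutEdge_symm {α : Type*} {G : SimpleGraph α} {x y : α}
    (h : G.IsCutEdge x y) : G.IsCutEdge y x := by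
  obtain ⟨hadj, a, b, hab, hn⟩ := h
  exact ⟨hadj.symm, a, b, hab, by rwa [Sym2.eq_swap]⟩

/-! ### Lattice lemmas -/

variable {L : Type*} [Lattice L] [BoundedOrder L] [IsModularLattice L]

lemma atom_of_le_b {a b x : L} (h1 : (⊥ : L) ⋖ a) (h2 : a ⋖ b)
    (hxb : x ≤ b) (hx0 : x ≠ ⊥) (hxb' : x ≠ b) : IsAtom x ∧ x ⋖ b := by
  have ha : IsAtom a := h1.is_atom
  by_cases hax : a ≤ x
  · have hxa : x = a := by
      rcases eq_or_lt_of_le hax with h | h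
      · exact h.symm
      · exact absurd (lt_of_le_of_ne hxb hxb') (h2.2 h)
    subst hxa
    exact ⟨ha, h2⟩
  · have hinf : a ⊓ x = ⊥ :=
      ha.2 _ (lt_of_le_of_ne inf_le_left fun h => hax (h ▸ inf_le_right))
    have hsup : a ⊔ x = b := by
      have hxna : ¬ x ≤ a := fun hxa => by
        rcases lt_or_eq_of_le hxa with h | h
        · exact hx0 (ha.2 x h)
        · exact hax h.symm.le
      have h : a < a ⊔ x := lt_of_le_of_ne le_sup_left
        fun h => hxna (h ▸ le_sup_right)
      rcases eq_or_lt_of_le (sup_le h2.1.le hxb : a ⊔ x ≤ b) with h' | h'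
      · exact h'
      · exact absurd h' (h2.2 h)
    constructor
    · have h3 : a ⋖ a ⊔ x := by rw [hsup]; exact h2
      have h4 := inf_covBy_of_covBy_sup_left h3
      rw [hinf] at h4
      exact h4.is_atom
    · have h4 : a ⊓ x ⋖ a := by rw [hinf]; exact h1
      have h5 := covBy_sup_of_inf_covBy_left h4
      rwa [hsup] at h5

lemma atom_or_coatom {a b x : L} (h1 : (⊥ : L) ⋖ a) (h2 : a ⋖ b) (h3 : b ⋖ ⊤)
    (hx0 : x ≠ ⊥) (hxt : x ≠ ⊤) : IsAtom x ∨ IsCoatom x := by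
  by_cases hxb : x ≤ b
  · rcases eq_or_ne x b with rfl | hne
    · exact Or.inr h3.isCoatom
    · exact Or.inl (atom_of_le_b h1 h2 hxb hx0 hne).1
  · have hb : IsCoatom b := h3.isCoatom
    have hsup : b ⊔ x = ⊤ := hb.2 _ (lt_of_le_of_ne le_sup_left
      fun h => hxb (h ▸ le_sup_right))
    have hz : b ⊓ x ⋖ x := by
      have : b ⋖ b ⊔ x := by rw [hsup]; exact h3
      exact inf_covBy_of_covBy_sup_left this
    rcases eq_or_ne (b ⊓ x) ⊥ with hzb | hzb
    · rw [hzb] at hz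
      exact Or.inl hz.is_atom
    · have hzb' : b ⊓ x ≠ b := fun h => by
        have hbx : b ≤ x := h ▸ inf_le_right
        rcases lt_or_eq_of_le hbx with h' | h'
        · exact hxt (hb.2 x h')
        · exact hxb h'.symm.le
      have hzcov : b ⊓ x ⋖ b := (atom_of_le_b h1 h2 inf_le_left hzb hzb').2
      have h5 := covBy_sup_of_inf_covBy_right (inf_comm b x ▸ hzcov : x ⊓ b ⋖ b)
      rw [sup_comm, hsup] at h5
      exact Or.inr h5.isCoatom

lemma not_atom_and_coatom {a b x : L} (h1 : (⊥ : L) ⋖ a) (h2 : a ⋖ b) (h3 : b ⋖ ⊤)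
    (hA : IsAtom x) (hC : IsCoatom x) : False := by
  have ha : IsAtom a := h1.is_atom
  have hab : a < b := h2.1
  have hbt : b < ⊤ := h3.1
  have hxa : ¬ x ≤ a := by
    intro hxa
    have hxb : x < b := lt_of_le_of_lt hxa hab
    exact hbt.ne (hC.2 b hxb)
  have hinf : x ⊓ a = ⊥ :=
    hA.2 (x ⊓ a) (lt_of_le_of_ne inf_le_left fun h => hxa (h ▸ inf_le_right))
  have hax : ¬ a ≤ x := by
    intro hax
    rcases lt_or_eq_of_le hax with h | h
    · exact ha.1 (hA.2 a h)
    · exact hxa h.symm.le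
  have hsup : x ⊔ a = ⊤ := hC.2 _ (lt_of_le_of_ne le_sup_left fun h => hax (h ▸ le_sup_right))
  have hmod : (a ⊔ x) ⊓ b = a ⊔ x ⊓ b := sup_inf_assoc_of_le x hab.le
  rw [sup_comm a x, hsup, top_inf_eq] at hmod
  rcases hA.le_iff.mp (inf_le_left : x ⊓ b ≤ x) with h | h
  · rw [h, sup_bot_eq] at hmod
    exact hab.ne hmod.symm
  · have hxb : x ≤ b := h ▸ inf_le_right
    rcases lt_or_eq_of_le hxb with h' | h'
    · exact hbt.ne (hC.2 b h')
    · subst h'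
      exact ha.1 (hA.2 a hab)

/-! ### RelSeries lemmas -/

lemma chain_of_series {α : Type*} [PartialOrder α] [BoundedOrder α]
    (s : RelSeries {(x, y) : α × α | x ⋖ y})
    (hh : s.head = ⊥) (hl : s.last = ⊤) (hlen : s.length = 3) :
    ∃ a b : α, (⊥ : α) ⋖ a ∧ a ⋖ b ∧ b ⋖ ⊤ := by
  refine ⟨s.toFun ⟨1, by omega⟩, s.toFun ⟨2, by omega⟩, ?_, ?_, ?_⟩
  · have h := s.step ⟨0, by omega⟩
    have h0 : s.toFun ⟨0, by omega⟩ = ⊥ := by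
      rw [← hh]; rfl
    rw [show (Fin.castSucc ⟨0, by omega⟩ : Fin (s.length + 1)) = ⟨0, by omega⟩ from rfl,
      h0] at h
    exact h
  · have h := s.step ⟨1, by omega⟩
    exact h
  · have h := s.step ⟨2, by omega⟩
    have h3 : s.toFun ⟨3, by omega⟩ = ⊤ := by
      rw [← hl]; congr 1; exact Fin.ext (by simp [hlen])
    rw [show (Fin.succ ⟨2, by omega⟩ : Fin (s.length + 1)) = ⟨3, by omega⟩ from rfl, h3] at h
    exact h

lemma series_of_chain {α : Type*} [PartialOrder α] [BoundedOrder α]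
    {a b : α} (h1 : (⊥ : α) ⋖ a) (h2 : a ⋖ b) (h3 : b ⋖ ⊤) :
    ∃ s : RelSeries {(x, y) : α × α | x ⋖ y}, s.head = ⊥ ∧ s.last = ⊤ ∧ s.length = 3 := by
  refine ⟨⟨3, ![⊥, a, b, ⊤], ?_⟩, by simp [RelSeries.head],
    by simp [RelSeries.last, Fin.last], rfl⟩
  intro i
  fin_cases i
  · exact h1
  · exact h2
  · exact h3

/-! ### Module-specific lemmas -/

variable {R V : Type*} [Ring R] [AddCommGroup V] [Module R V]

lemma detour {x y : ProperSubmodule R V} (hcut : (intersectionGraph R V).IsCutEdge x y) :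
    ∀ Z : ProperSubmodule R V, Z ≠ x → Z ≠ y →
      (intersectionGraph R V).Adj x Z → (intersectionGraph R V).Adj Z y → False := by
  intro Z hZx hZy h1 h2
  apply not_reachable_of_isCutEdge hcut
  have e1 : ((intersectionGraph R V).deleteEdges {s(x,y)}).Adj x Z := by
    rw [SimpleGraph.deleteEdges_adj]
    refine ⟨h1, ?_⟩
    simp only [Set.mem_singleton_iff, Sym2.eq_iff]
    rintro (⟨-, rfl⟩ | ⟨-, rfl⟩)
    · exact hZy rfl
    · exact hZx rfl
  have e2 : ((intersectionGraph R V).deleteEdges {s(x,y)}).Adj Z y := by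
    rw [SimpleGraph.deleteEdges_adj]
    refine ⟨h2, ?_⟩
    simp only [Set.mem_singleton_iff, Sym2.eq_iff]
    rintro (⟨rfl, -⟩ | ⟨rfl, -⟩)
    · exact hZx rfl
    · exact hZy rfl
  exact e1.reachable.trans e2.reachable

lemma forward_core (x y : ProperSubmodule R V)
    (hcut : (intersectionGraph R V).IsCutEdge x y) (hlt : x.1 < y.1) :
    HasCompositionSeriesOfLength R V 3 ∧
      ∃ S : Submodule R V, IsSimpleModule R S ∧
        ∃! M : Submodule R V, IsCoatom M ∧ S ≤ M := by
  have hdet := detour hcut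
  -- x is an atom
  have hxatom : IsAtom x.1 := by
    refine ⟨x.2.1, fun W hW => by_contra fun hW0 => ?_⟩
    have hWtop : W ≠ ⊤ := fun h => not_top_lt (h ▸ hW)
    refine hdet ⟨W, hW0, hWtop⟩
      (fun h => hW.ne (congrArg Subtype.val h))
      (fun h => (hW.trans hlt).ne (congrArg Subtype.val h))
      ⟨fun h => hW.ne' (congrArg Subtype.val h),
        by rw [inf_eq_right.mpr hW.le]; exact hW0⟩
      ⟨fun h => (hW.trans hlt).ne (congrArg Subtype.val h),
        by rw [inf_eq_left.mpr (hW.le.trans hlt.le)]; exact hW0⟩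
  -- x ⋖ y
  have hcov : x.1 ⋖ y.1 := by
    refine ⟨hlt, fun W hxW hWy => ?_⟩
    have hW0 : W ≠ ⊥ := fun h => not_lt_bot (h ▸ hxW)
    have hWt : W ≠ ⊤ := fun h => not_top_lt (h ▸ hWy)
    exact hdet ⟨W, hW0, hWt⟩
      (fun h => hxW.ne' (congrArg Subtype.val h))
      (fun h => hWy.ne (congrArg Subtype.val h))
      ⟨fun h => hxW.ne (congrArg Subtype.val h),
        by rw [inf_eq_left.mpr hxW.le]; exact x.2.1⟩
      ⟨fun h => hWy.ne (congrArg Subtype.val h),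
        by rw [inf_eq_left.mpr hWy.le]; exact hW0⟩
  -- y is a coatom
  have hyco : IsCoatom y.1 := by
    refine ⟨y.2.2, fun W hW => by_contra fun hWt => ?_⟩
    have hW0 : W ≠ ⊥ := fun h => not_lt_bot (h ▸ hW)
    exact hdet ⟨W, hW0, hWt⟩
      (fun h => (hlt.trans hW).ne' (congrArg Subtype.val h))
      (fun h => hW.ne' (congrArg Subtype.val h))
      ⟨fun h => (hlt.trans hW).ne (congrArg Subtype.val h),
        by rw [inf_eq_left.mpr (hlt.le.trans hW.le)]; exact x.2.1⟩
      ⟨fun h => hW.ne' (congrArg Subtype.val h),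
        by rw [inf_eq_right.mpr hW.le]; exact y.2.1⟩
  -- y is the unique coatom above x
  have huniq : ∀ W : Submodule R V, IsCoatom W ∧ x.1 ≤ W → W = y.1 := by
    rintro W ⟨hWc, hxW⟩
    by_contra hne
    have hW0 : W ≠ ⊥ := fun h => x.2.1 (le_bot_iff.mp (h ▸ hxW))
    refine hdet ⟨W, hW0, hWc.1⟩
      (fun h => y.2.2 (hWc.2 y.1 (by rw [show W = x.1 from congrArg Subtype.val h]; exact hlt)))
      (fun h => hne (congrArg Subtype.val h))
      ⟨fun h => y.2.2 (hWc.2 y.1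
          (by rw [show W = x.1 from (congrArg Subtype.val h).symm]; exact hlt)),
        by rw [inf_eq_left.mpr hxW]; exact x.2.1⟩
      ⟨fun h => hne (congrArg Subtype.val h),
        fun h => x.2.1 (le_bot_iff.mp (le_trans (le_inf hxW hlt.le) (le_of_eq h)))⟩
  exact ⟨series_of_chain hxatom.bot_covBy hcov hyco.covBy_top,
    x.1, isSimpleModule_iff_isAtom.mpr hxatom, y.1, ⟨hyco, hlt.le⟩, huniq⟩

end CutEdgeAux

open CutEdgeAux in
theorem stmt6 (R V : Type*) [Ring R] [AddCommGroup V] [Module R V] :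
    (∃ x y : ProperSubmodule R V, (intersectionGraph R V).IsCutEdge x y) ↔
      (HasCompositionSeriesOfLength R V 3 ∧
        ∃ S : Submodule R V, IsSimpleModule R S ∧
          ∃! M : Submodule R V, IsCoatom M ∧ S ≤ M) := by
  constructor
  · rintro ⟨x, y, hcut⟩
    have hne : x.1 ≠ y.1 := fun h => hcut.1.1 (Subtype.ext h)
    by_cases hxy : x.1 ≤ y.1
    · exact forward_core x y hcut (lt_of_le_of_ne hxy hne)
    · by_cases hyx : y.1 ≤ x.1
      · exact forward_core y x (isCutEdge_symm hcut) (lt_of_le_of_ne hyx (Ne.symm hne))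
      · exfalso
        have hZt : x.1 ⊓ y.1 ≠ ⊤ := fun h => x.2.2 (top_le_iff.mp (le_of_eq_of_le h.symm inf_le_left))
        refine detour hcut ⟨x.1 ⊓ y.1, hcut.1.2, hZt⟩
          (fun h => hxy (inf_eq_left.mp (congrArg Subtype.val h)))
          (fun h => hyx (inf_eq_right.mp (congrArg Subtype.val h)))
          ⟨fun h => hxy (inf_eq_left.mp ((congrArg Subtype.val h).symm)),
            by rw [inf_eq_right.mpr (inf_le_left : x.1 ⊓ y.1 ≤ x.1)]; exact hcut.1.2⟩
          ⟨fun h => hyx (inf_eq_right.mp (congrArg Subtype.val h)),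
            by rw [inf_eq_left.mpr (inf_le_right : x.1 ⊓ y.1 ≤ y.1)]; exact hcut.1.2⟩
  · rintro ⟨⟨s, hh, hl, hlen⟩, S, hS, M, ⟨hMc, hSM⟩, huniq⟩
    obtain ⟨a, b, h1, h2, h3⟩ := chain_of_series s hh hl hlen
    have hSatom : IsAtom S := isSimpleModule_iff_isAtom.mp hS
    have hSne : S ≠ M := fun h => not_atom_and_coatom h1 h2 h3 hSatom (h ▸ hMc)
    have hSt : S ≠ ⊤ := fun h => hMc.1 (top_le_iff.mp (h ▸ hSM))
    have hM0 : M ≠ ⊥ := fun h => hSatom.1 (le_bot_iff.mp (h ▸ hSM))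
    have hadj : (intersectionGraph R V).Adj ⟨S, hSatom.1, hSt⟩ ⟨M, hM0, hMc.1⟩ :=
      ⟨fun h => hSne (congrArg Subtype.val h),
        by rw [inf_eq_left.mpr hSM]; exact hSatom.1⟩
    refine ⟨_, _, isCutEdge_of_unique_neighbor hadj ?_⟩
    rintro ⟨W, hW0, hWt⟩ ⟨hne, hinf⟩
    have hSW : S ≤ W := by
      rcases lt_or_eq_of_le (inf_le_left : S ⊓ W ≤ S) with h | h
      · exact absurd (hSatom.2 _ h) hinf
      · exact inf_eq_left.mp h
    rcases atom_or_coatom h1 h2 h3 hW0 hWt with hA | hC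
    · exfalso
      rcases lt_or_eq_of_le hSW with h | h
      · exact hSatom.1 (hA.2 S h)
      · exact hne (Subtype.ext h)
    · exact Subtype.ext (huniq W ⟨hC, hSW⟩)
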